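/- Under uniform i.i.d. inputs, among all Boolean functions f : {-1,1}^n → {-1,1} with a fixed value of f̂(∅) = c (|c| < 1, c a multiple of 2^{1−n}), every function canalizing in variable i achieves the maximum possible mutual information MI(f(X); X_i), namely h((1+c)/2) − (1/2)·h(|c|). -/

import Mathlib

/-- ±1 encoding of a Boolean value. -/
noncomputable def pm (b : Bool) : ℝ := if b then 1 else -1

/-- Fourier coefficient of `f` at `U` w.r.t. the uniform distribution on `{-1,1}^n`. -/
noncomputable def fhat {n : ℕ} (f : (Fin n → Bool) → Bool) (U : Finset (Fin n)) : ℝ :=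
  (2 : ℝ)⁻¹ ^ n * ∑ x : Fin n → Bool, pm (f x) * ∏ i ∈ U, pm (x i)

/-- Binary entropy in bits (with `h 0 = h 1 = 0` since `logb 2 0 = 0`). -/
noncomputable def binEnt (p : ℝ) : ℝ := -(p * Real.logb 2 p) - (1 - p) * Real.logb 2 (1 - p)

/-- Mutual information `MI(f(X); X_i)` under i.i.d. uniform inputs:
`H(f(X)) - H(f(X) | X_i)`, entropies in bits. -/
noncomputable def MI {n : ℕ} (f : (Fin n → Bool) → Bool) (i : Fin n) : ℝ :=
  binEnt ((∑ x : Fin n → Bool, if f x then (1 : ℝ) else 0) / 2 ^ n) -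
    ∑ v : Bool, (1 / 2) *
      binEnt ((∑ x : Fin n → Bool, if f x ∧ x i = v then (1 : ℝ) else 0) / 2 ^ (n - 1))

lemma binEnt_eq (p : ℝ) : binEnt p = (Real.log 2)⁻¹ * Real.binEntropy p := by
  simp [binEnt, Real.binEntropy, Real.logb, Real.log_inv, div_eq_inv_mul]; ring

lemma binEnt_zero : binEnt 0 = 0 := by simp [binEnt]

lemma binEnt_one : binEnt 1 = 0 := by simp [binEnt]

lemma binEnt_one_sub (p : ℝ) : binEnt (1 - p) = binEnt p := by
  unfold binEnt; rw [sub_sub_cancel]; ring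

lemma binEnt_concave : ConcaveOn ℝ (Set.Icc (0:ℝ) 1) binEnt := by
  have h := (Real.strictConcave_binEntropy.concaveOn).smul
    (c := (Real.log 2)⁻¹) (by positivity)
  have e : binEnt = fun x => (Real.log 2)⁻¹ • Real.binEntropy x := by
    funext p; simp [binEnt_eq]
  rw [e]; exact h

lemma binEnt_interp {c q : ℝ} (hc0 : 0 ≤ c) (hc1 : c < 1) (hcq : c ≤ q) (hq1 : q ≤ 1) :
    (1 - q) / (1 - c) * binEnt c ≤ binEnt q := by
  have h1c : (0:ℝ) < 1 - c := by linarith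
  have hne : (1:ℝ) - c ≠ 0 := ne_of_gt h1c
  have hmem1 : c ∈ Set.Icc (0:ℝ) 1 := Set.mem_Icc.2 ⟨hc0, hc1.le⟩
  have hmem2 : (1:ℝ) ∈ Set.Icc (0:ℝ) 1 := Set.mem_Icc.2 ⟨by norm_num, le_rfl⟩
  have ha : (0:ℝ) ≤ (1 - q) / (1 - c) := by
    apply div_nonneg <;> linarith
  have hb : (0:ℝ) ≤ (q - c) / (1 - c) := by
    apply div_nonneg <;> linarith
  have hab : (1 - q) / (1 - c) + (q - c) / (1 - c) = 1 := by
    field_simp; ring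
  have h := binEnt_concave.2 hmem1 hmem2 ha hb hab
  have hx : (1 - q) / (1 - c) * c + (q - c) / (1 - c) = q := by
    field_simp; ring
  simpa [smul_eq_mul, hx, binEnt_one] using h

lemma key0 {c qt qf : ℝ} (hc0 : 0 ≤ c) (hc1 : c < 1) (hqt1 : qt ≤ 1) (hqf1 : qf ≤ 1)
    (hsum : qt + qf = 1 + c) : binEnt c ≤ binEnt qt + binEnt qf := by
  have h1 := binEnt_interp hc0 hc1 (by linarith) hqt1
  have h2 := binEnt_interp hc0 hc1 (by linarith) hqf1
  have hne : (1:ℝ) - c ≠ 0 := by intro h; linarith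
  have h3 : (1 - qt) / (1 - c) + (1 - qf) / (1 - c) = 1 := by
    field_simp; linarith
  calc binEnt c = (1 - qt) / (1 - c) * binEnt c + (1 - qf) / (1 - c) * binEnt c := by
        rw [← add_mul, h3, one_mul]
    _ ≤ binEnt qt + binEnt qf := add_le_add h1 h2

lemma key_ineq {c qt qf : ℝ} (hqt0 : 0 ≤ qt) (hqt1 : qt ≤ 1) (hqf0 : 0 ≤ qf) (hqf1 : qf ≤ 1)
    (hsum : qt + qf = 1 + c) (hc1 : |c| < 1) : binEnt |c| ≤ binEnt qt + binEnt qf := by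
  rcases le_or_gt 0 c with h | h
  · rw [abs_of_nonneg h]
    exact key0 h (by rwa [abs_of_nonneg h] at hc1) hqt1 hqf1 hsum
  · rw [abs_of_neg h]
    have := key0 (c := -c) (qt := 1 - qt) (qf := 1 - qf) (by linarith)
      (by rw [abs_of_neg h] at hc1; linarith) (by linarith) (by linarith) (by linarith)
    rwa [binEnt_one_sub, binEnt_one_sub] at this

lemma flip_invol {n : ℕ} (i : Fin n) :
    Function.Involutive (fun x : Fin n → Bool => Function.update x i (!x i)) := by
  intro x
  funext j
  rcases eq_or_ne j i with rfl | hj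
  · simp
  · simp [Function.update_of_ne hj]

lemma sum_indicator_eq {n : ℕ} (i : Fin n) (v : Bool) :
    ∑ x : Fin n → Bool, (if x i = v then (1:ℝ) else 0) = 2 ^ (n - 1) := by
  have hpos : 0 < n := i.pos
  have hswap : ∑ x : Fin n → Bool, (if x i = v then (1:ℝ) else 0)
      = ∑ x : Fin n → Bool, (if x i = !v then (1:ℝ) else 0) := by
    refine Fintype.sum_bijective (fun x => Function.update x i (!x i))
      (flip_invol i).bijective _ _ ?_
    intro x
    simp only [Function.update_self]
    cases hx : x i <;> cases v <;> simp [hx]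
  have htot : ∑ x : Fin n → Bool, ((if x i = v then (1:ℝ) else 0) + (if x i = !v then (1:ℝ) else 0))
      = 2 ^ n := by
    have : ∀ x : Fin n → Bool,
        (if x i = v then (1:ℝ) else 0) + (if x i = !v then (1:ℝ) else 0) = 1 := by
      intro x; cases hx : x i <;> cases v <;> simp [hx]
    rw [Finset.sum_congr rfl fun x _ => this x]
    simp [Fintype.card_fun]
  rw [Finset.sum_add_distrib, ← hswap] at htot
  have h2 : (2:ℝ) ^ (n - 1) * 2 = 2 ^ n := by
    rw [← pow_succ, Nat.sub_add_cancel hpos]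
  linarith

lemma MI_repr {n : ℕ} (g : (Fin n → Bool) → Bool) (i : Fin n) (c : ℝ) (hg : fhat g ∅ = c) :
    ∃ qt qf : ℝ, 0 ≤ qt ∧ qt ≤ 1 ∧ 0 ≤ qf ∧ qf ≤ 1 ∧ qt + qf = 1 + c ∧
      MI g i = binEnt ((1 + c) / 2) - (1 / 2) * binEnt qt - (1 / 2) * binEnt qf ∧
      qt = (∑ x : Fin n → Bool, if g x ∧ x i = true then (1:ℝ) else 0) / 2 ^ (n - 1) ∧
      qf = (∑ x : Fin n → Bool, if g x ∧ x i = false then (1:ℝ) else 0) / 2 ^ (n - 1) := by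
  have hpos : 0 < n := i.pos
  set St := ∑ x : Fin n → Bool, if g x ∧ x i = true then (1:ℝ) else 0 with hSt
  set Sf := ∑ x : Fin n → Bool, if g x ∧ x i = false then (1:ℝ) else 0 with hSf
  set Sg := ∑ x : Fin n → Bool, if g x then (1:ℝ) else 0 with hSg
  have hD : (0:ℝ) < 2 ^ (n - 1) := by positivity
  have h2 : (2:ℝ) ^ (n - 1) * 2 = 2 ^ n := by
    rw [← pow_succ, Nat.sub_add_cancel hpos]
  -- split of Sg
  have hsplit : St + Sf = Sg := by
    rw [hSt, hSf, hSg, ← Finset.sum_add_distrib]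
    refine Finset.sum_congr rfl fun x _ => ?_
    cases hgx : g x <;> cases hx : x i <;> simp [hgx, hx]
  -- fhat value
  have hfg : Sg = (1 + c) / 2 * 2 ^ n := by
    have hexp : fhat g ∅ = (2:ℝ)⁻¹ ^ n * (2 * Sg - 2 ^ n) := by
      unfold fhat
      congr 1
      have hcard : (Finset.univ : Finset (Fin n → Bool)).card = 2 ^ n := by
        simp [Fintype.card_fun]
      calc ∑ x : Fin n → Bool, pm (g x) * ∏ j ∈ (∅ : Finset (Fin n)), pm (x j)
          = ∑ x : Fin n → Bool, (2 * (if g x then (1:ℝ) else 0) - 1) := by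
            refine Finset.sum_congr rfl fun x _ => ?_
            cases hgx : g x <;> norm_num [pm, hgx]
        _ = 2 * Sg - 2 ^ n := by
            rw [hSg, Finset.mul_sum, Finset.sum_sub_distrib, Finset.sum_const, hcard,
              nsmul_eq_mul, mul_one]
            push_cast
            ring
    rw [hexp] at hg
    have h2n : (0:ℝ) < 2 ^ n := by positivity
    have hinv : (2:ℝ)⁻¹ ^ n = ((2:ℝ) ^ n)⁻¹ := by rw [inv_pow]
    rw [hinv] at hg
    field_simp at hg ⊢
    linarith
  -- bounds
  have hSt0 : 0 ≤ St := Finset.sum_nonneg fun x _ => by positivity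
  have hSf0 : 0 ≤ Sf := Finset.sum_nonneg fun x _ => by positivity
  have hStle : St ≤ 2 ^ (n - 1) := by
    rw [hSt, ← sum_indicator_eq i true]
    refine Finset.sum_le_sum fun x _ => ?_
    cases hgx : g x <;> cases hx : x i <;> simp [hgx, hx]
  have hSfle : Sf ≤ 2 ^ (n - 1) := by
    rw [hSf, ← sum_indicator_eq i false]
    refine Finset.sum_le_sum fun x _ => ?_
    cases hgx : g x <;> cases hx : x i <;> simp [hgx, hx]
  refine ⟨St / 2 ^ (n - 1), Sf / 2 ^ (n - 1), by positivity, ?_, by positivity, ?_, ?_, ?_, rfl, rfl⟩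
  · rw [div_le_one hD]; exact hStle
  · rw [div_le_one hD]; exact hSfle
  · have hS2 : Sg = (1 + c) * 2 ^ (n - 1) := by rw [hfg, ← h2]; ring
    rw [← add_div, hsplit, hS2, mul_div_assoc, div_self (ne_of_gt hD), mul_one]
  · unfold MI
    rw [Fintype.sum_bool, ← hSg, ← hSt, ← hSf, hfg]
    have h2n : (2:ℝ) ^ n ≠ 0 := by positivity
    rw [mul_div_assoc, div_self h2n, mul_one]
    ring

lemma MI_le {n : ℕ} (g : (Fin n → Bool) → Bool) (i : Fin n) (c : ℝ)
    (hg : fhat g ∅ = c) (hc1 : |c| < 1) :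
    MI g i ≤ binEnt ((1 + c) / 2) - (1 / 2) * binEnt |c| := by
  obtain ⟨qt, qf, h0, h1, h2, h3, hsum, hMI, _, _⟩ := MI_repr g i c hg
  have := key_ineq h0 h1 h2 h3 hsum hc1
  rw [hMI]; linarith


/-- Among all Boolean functions with a fixed value of `f̂(∅) = c`, every function
canalizing in variable `i` achieves the maximal mutual information
`h((1+c)/2) - (1/2)·h(|c|)`. -/
theorem canalizing_maximizes_mi {n : ℕ} (f : (Fin n → Bool) → Bool) (i : Fin n)
    (a b : Bool) (hcan : ∀ x : Fin n → Bool, x i = a → f x = b)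
    (c : ℝ) (hc : fhat f ∅ = c) (hc1 : |c| < 1) :
    (∀ g : (Fin n → Bool) → Bool, fhat g ∅ = c → MI g i ≤ MI f i) ∧
    MI f i = binEnt ((1 + c) / 2) - (1 / 2) * binEnt |c| := by
  have hD : (0:ℝ) < 2 ^ (n - 1) := by positivity
  obtain ⟨qt, qf, h0, h1, h2, h3, hsum, hMI, hqt, hqf⟩ := MI_repr f i c hc
  -- compute the canalized sum
  have hSaF : b = false → (∑ x : Fin n → Bool, if f x ∧ x i = a then (1:ℝ) else 0) = 0 := by
    intro hb
    refine Finset.sum_eq_zero fun x _ => ?_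
    by_cases hx : x i = a
    · have := hcan x hx; rw [hb] at this; simp [this]
    · simp [hx]
  have hSaT : b = true →
      (∑ x : Fin n → Bool, if f x ∧ x i = a then (1:ℝ) else 0) = 2 ^ (n - 1) := by
    intro hb
    rw [← sum_indicator_eq i a]
    refine Finset.sum_congr rfl fun x _ => ?_
    by_cases hx : x i = a
    · have := hcan x hx; rw [hb] at this; simp [this, hx]
    · simp [hx]
  have heq : MI f i = binEnt ((1 + c) / 2) - (1 / 2) * binEnt |c| := by
    -- identify qa
    have hflip : binEnt (1 + c) = binEnt (-c) := by
      rw [← binEnt_one_sub (-c)]; norm_num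
    cases ha : a <;> cases hb : b
    · -- a = false, b = false
      rw [ha] at hSaF
      have hqf0 : qf = 0 := by rw [hqf, hSaF hb]; simp
      have hqtv : qt = 1 + c := by rw [hqf0] at hsum; linarith
      have hcneg : c ≤ 0 := by rw [hqtv] at h1; linarith
      have habs : |c| = -c := abs_of_nonpos hcneg
      rw [hMI, hqf0, hqtv, binEnt_zero, habs, hflip]
      ring
    · -- a = false, b = true
      rw [ha] at hSaT
      have hqf1 : qf = 1 := by rw [hqf, hSaT hb, div_self (ne_of_gt hD)]
      have hqtv : qt = c := by rw [hqf1] at hsum; linarith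
      have hcpos : 0 ≤ c := by rw [hqtv] at h0; linarith
      rw [hMI, hqf1, hqtv, binEnt_one, abs_of_nonneg hcpos]
      ring
    · -- a = true, b = false
      rw [ha] at hSaF
      have hqt0 : qt = 0 := by rw [hqt, hSaF hb]; simp
      have hqfv : qf = 1 + c := by rw [hqt0] at hsum; linarith
      have hcneg : c ≤ 0 := by rw [hqfv] at h3; linarith
      have habs : |c| = -c := abs_of_nonpos hcneg
      rw [hMI, hqt0, hqfv, binEnt_zero, habs, hflip]
      ring
    · -- a = true, b = true
      rw [ha] at hSaT
      have hqt1 : qt = 1 := by rw [hqt, hSaT hb, div_self (ne_of_gt hD)]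
      have hqfv : qf = c := by rw [hqt1] at hsum; linarith
      have hcpos : 0 ≤ c := by rw [hqfv] at h2; linarith
      rw [hMI, hqt1, hqfv, binEnt_one, abs_of_nonneg hcpos]
      ring
  refine ⟨fun g hg => ?_, heq⟩
  rw [heq]
  exact MI_le g i c hg hc1
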